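/- Buyer-side inequality in expectation: for every nondecreasing c : [0,1] → ℝ, every Borel probability measure ν on ℝ with ∫|v| dν(v) < ∞, and every λ ∈ (0,1), one has (1 − λ)·FB ≤ u_S + u_B · ln(1/λ), where FB := ∫_ℝ ∫₀¹ max(v − c(q), 0) dq dν(v), u_B := ∫_ℝ sup_{p ∈ ℝ} ((v − p)·x(p)) dν(v), and u_S := ∫₀¹ sup_{p ∈ ℝ} ((p − c(q))·ν({v : v ≥ p})) dq. -/

import Mathlib

open MeasureTheory Set

/-- The probability that the seller (with cost curve `c` on quantiles in `[0,1]`)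
accepts a price `p`: the Lebesgue measure of `{q ∈ [0,1] : c q ≤ p}`. -/
noncomputable def accProb (c : ℝ → ℝ) (p : ℝ) : ℝ :=
  (volume {q : ℝ | q ∈ Icc (0:ℝ) 1 ∧ c q ≤ p}).toReal

/-- First-best gains from trade, in expectation over the buyer value `v ∼ ν`. -/
noncomputable def FB (c : ℝ → ℝ) (ν : Measure ℝ) : ℝ :=
  ∫ v, (∫ q in (0:ℝ)..1, max (v - c q) 0) ∂ν

/-- The buyer's expected optimal proposer utility. -/
noncomputable def uB (c : ℝ → ℝ) (ν : Measure ℝ) : ℝ :=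
  ∫ v, (⨆ p : ℝ, (v - p) * accProb c p) ∂ν

/-- The seller's expected optimal proposer utility. -/
noncomputable def uS (c : ℝ → ℝ) (ν : Measure ℝ) : ℝ :=
  ∫ q in (0:ℝ)..1, ⨆ p : ℝ, (p - c q) * (ν {v : ℝ | p ≤ v}).toReal

set_option maxHeartbeats 1000000 in
theorem stmt6 (c : ℝ → ℝ) (hc : MonotoneOn c (Icc (0:ℝ) 1))
    (ν : Measure ℝ) [IsProbabilityMeasure ν]
    (hν : Integrable (fun v : ℝ => v) ν)
    (l : ℝ) (hl : l ∈ Ioo (0:ℝ) 1) :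
    (1 - l) * FB c ν ≤ uS c ν + uB c ν * Real.log (1 / l) := by
  obtain ⟨hl0, hl1⟩ := hl
  have hlne : l ≠ 0 := ne_of_gt hl0
  have hlog : 0 ≤ Real.log (1 / l) := Real.log_nonneg (by rw [le_div_iff₀ hl0]; linarith)
  -- the clamped cost function
  set C : ℝ → ℝ := fun q => c (max 0 (min 1 q)) with hCdef
  have hclampmem : ∀ q : ℝ, max 0 (min 1 q) ∈ Icc (0:ℝ) 1 :=
    fun q => ⟨le_max_left _ _, max_le zero_le_one (min_le_left _ _)⟩
  have hC : Monotone C := by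
    intro a b hab
    exact hc (hclampmem a) (hclampmem b) (max_le_max le_rfl (min_le_min le_rfl hab))
  have hCeq : ∀ q ∈ Icc (0:ℝ) 1, C q = c q := by
    intro q hq
    simp only [hCdef]
    rw [min_eq_right hq.2, max_eq_right hq.1]
  have hCmeas : Measurable C := hC.measurable
  have hC0le : ∀ u : ℝ, C 0 ≤ C u := by
    intro u
    simp only [hCdef]
    norm_num
    exact hc ⟨le_refl 0, zero_le_one⟩ (hclampmem u) (le_max_left _ _)
  have hCle1 : ∀ u : ℝ, C u ≤ C 1 := by
    intro u
    simp only [hCdef]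
    norm_num
    exact hc (hclampmem u) ⟨zero_le_one, le_refl 1⟩ (max_le zero_le_one (min_le_left _ _))
  -- the tail probability function
  set r : ℝ → ℝ := fun p => (ν {v : ℝ | p ≤ v}).toReal with hrdef
  have hrnn : ∀ p, 0 ≤ r p := fun p => ENNReal.toReal_nonneg
  have hrle1 : ∀ p, r p ≤ 1 := by
    intro p
    have h1 : ν {v : ℝ | p ≤ v} ≤ 1 := prob_le_one
    have := ENNReal.toReal_mono ENNReal.one_ne_top h1
    simpa [hrdef] using this
  have hranti : Antitone r := by
    intro p q hpq
    apply ENNReal.toReal_mono (measure_ne_top ν _)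
    exact measure_mono (fun v hv => le_trans hpq hv)
  have hrmeas : Measurable r := hranti.measurable
  -- facts about accProb
  have hxnn : ∀ p, 0 ≤ accProb c p := fun p => ENNReal.toReal_nonneg
  have hSsub : ∀ p : ℝ, {q : ℝ | q ∈ Icc (0:ℝ) 1 ∧ c q ≤ p} ⊆ Icc 0 1 := fun p q hq => hq.1
  have hIccfin : volume (Icc (0:ℝ) 1) ≠ ⊤ := by
    rw [Real.volume_Icc]; exact ENNReal.ofReal_ne_top
  have hxfin : ∀ p : ℝ, volume {q : ℝ | q ∈ Icc (0:ℝ) 1 ∧ c q ≤ p} ≠ ⊤ :=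
    fun p => ne_top_of_le_ne_top hIccfin (measure_mono (hSsub p))
  have hxle1 : ∀ p, accProb c p ≤ 1 := by
    intro p
    have h1 : volume {q : ℝ | q ∈ Icc (0:ℝ) 1 ∧ c q ≤ p} ≤ 1 := by
      refine le_trans (measure_mono (hSsub p)) ?_
      rw [Real.volume_Icc]
      simp
    have := ENNReal.toReal_mono ENNReal.one_ne_top h1
    simpa [accProb] using this
  have hxq : ∀ q : ℝ, q ∈ Icc (0:ℝ) 1 → q ≤ accProb c (C q) := by
    intro q hq
    have hsub : Icc (0:ℝ) q ⊆ {w : ℝ | w ∈ Icc (0:ℝ) 1 ∧ c w ≤ C q} := by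
      intro w hw
      have hw1 : w ∈ Icc (0:ℝ) 1 := ⟨hw.1, le_trans hw.2 hq.2⟩
      refine ⟨hw1, ?_⟩
      rw [← hCeq w hw1]
      exact hC hw.2
    have hvol : ENNReal.ofReal q ≤ volume {w : ℝ | w ∈ Icc (0:ℝ) 1 ∧ c w ≤ C q} := by
      calc ENNReal.ofReal q = volume (Icc (0:ℝ) q) := by rw [Real.volume_Icc, sub_zero]
      _ ≤ _ := measure_mono hsub
    have := ENNReal.toReal_mono (hxfin _) hvol
    rw [ENNReal.toReal_ofReal hq.1] at this
    exact this
  have hx0 : ∀ p : ℝ, p < C 0 → accProb c p = 0 := by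
    intro p hp
    have hempty : {q : ℝ | q ∈ Icc (0:ℝ) 1 ∧ c q ≤ p} = ∅ := by
      ext q
      simp only [mem_setOf_eq, mem_empty_iff_false, iff_false, not_and]
      intro hq hcq
      have h1 : C 0 ≤ C q := hC hq.1
      rw [hCeq q hq] at h1
      linarith
    rw [accProb, hempty]
    simp
  -- the buyer's utility function
  set UB : ℝ → ℝ := fun v => ⨆ p : ℝ, (v - p) * accProb c p with hUBdef
  have hUBub : ∀ v p : ℝ, (v - p) * accProb c p ≤ max (v - C 0) 0 := by
    intro v p
    rcases lt_or_ge p (C 0) with h | h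
    · rw [hx0 p h, mul_zero]; exact le_max_right _ _
    · rcases le_or_gt p v with h2 | h2
      · calc (v - p) * accProb c p ≤ (v - p) * 1 :=
              mul_le_mul_of_nonneg_left (hxle1 p) (by linarith)
        _ = v - p := mul_one _
        _ ≤ max (v - C 0) 0 := le_trans (by linarith) (le_max_left _ _)
      · have h3 : (v - p) * accProb c p ≤ 0 :=
          mul_nonpos_of_nonpos_of_nonneg (by linarith) (hxnn p)
        exact h3.trans (le_max_right _ _)
  have hUBbdd : ∀ v : ℝ, BddAbove (range fun p => (v - p) * accProb c p) :=
    fun v => ⟨max (v - C 0) 0, by rintro y ⟨p, rfl⟩; exact hUBub v p⟩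
  have hUBnn : ∀ v, 0 ≤ UB v := by
    intro v
    have := le_ciSup (hUBbdd v) v
    simpa using this
  have hUBle : ∀ v, UB v ≤ max (v - C 0) 0 := fun v => ciSup_le (hUBub v)
  have hUBmono : Monotone UB := by
    intro v w hvw
    apply ciSup_le
    intro p
    apply le_ciSup_of_le (hUBbdd w) p
    exact mul_le_mul_of_nonneg_right (by linarith) (hxnn p)
  have hUBkey : ∀ v : ℝ, ∀ q ∈ Icc (0:ℝ) 1, q * max (v - C q) 0 ≤ UB v := by
    intro v q hq
    rcases le_or_gt (C q) v with h | h
    · rw [max_eq_left (by linarith)]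
      calc q * (v - C q) = (v - C q) * q := mul_comm _ _
      _ ≤ (v - C q) * accProb c (C q) :=
          mul_le_mul_of_nonneg_left (hxq q hq) (by linarith)
      _ ≤ UB v := le_ciSup (hUBbdd v) (C q)
    · rw [max_eq_right (by linarith), mul_zero]
      exact hUBnn v
  -- the seller's utility function
  set Eabs : ℝ := ∫ v, |v| ∂ν with hEdef
  have hνabs : Integrable (fun v : ℝ => |v|) ν := hν.abs
  have hA7 : ∀ s p : ℝ, (p - s) * r p ≤ Eabs + |s| := by
    intro s p
    have hEnn : 0 ≤ Eabs := integral_nonneg (fun v => abs_nonneg v)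
    rcases le_or_gt p s with h | h
    · have h1 : (p - s) * r p ≤ 0 :=
        mul_nonpos_of_nonpos_of_nonneg (by linarith) (hrnn p)
      have := abs_nonneg s
      linarith
    · have hint : Integrable (fun v : ℝ => |v| + |s|) ν := hνabs.add (integrable_const _)
      have h1 : (p - s) * r p = ∫ _ in Ici p, (p - s) ∂ν := by
        rw [setIntegral_const, smul_eq_mul, mul_comm]
        rfl
      have h2 : ∫ _ in Ici p, (p - s) ∂ν ≤ ∫ v in Ici p, (|v| + |s|) ∂ν := by
        apply setIntegral_mono_on (integrableOn_const (C := p - s) (measure_lt_top ν _).ne)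
          hint.integrableOn measurableSet_Ici
        intro v hv
        have hv' : p ≤ v := hv
        have h3 := le_abs_self v
        have h4 := neg_abs_le s
        linarith
      have h5 : ∫ v in Ici p, (|v| + |s|) ∂ν ≤ ∫ v, (|v| + |s|) ∂ν :=
        setIntegral_le_integral hint (ae_of_all _ fun v => by positivity)
      have h6 : ∫ v, (|v| + |s|) ∂ν = Eabs + |s| := by
        rw [integral_add hνabs (integrable_const _), integral_const, probReal_univ]
        simp [hEdef]
      linarith
  set US : ℝ → ℝ := fun q => ⨆ p : ℝ, (p - c q) * r p with hUSdef
  have hUSbdd : ∀ q : ℝ, BddAbove (range fun p => (p - c q) * r p) :=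
    fun q => ⟨Eabs + |c q|, by rintro y ⟨p, rfl⟩; exact hA7 (c q) p⟩
  have hUSnn : ∀ q, 0 ≤ US q := by
    intro q
    have := le_ciSup (hUSbdd q) (c q)
    simpa using this
  have hUSanti : AntitoneOn US (Icc (0:ℝ) 1) := by
    intro a ha b hb hab
    apply ciSup_le
    intro p
    apply le_ciSup_of_le (hUSbdd a) p
    exact mul_le_mul_of_nonneg_right (by linarith [hc ha hb hab]) (hrnn p)
  have huS : uS c ν = ∫ q in (0:ℝ)..1, US q := by
    rw [hUSdef]; rfl
  have huB : uB c ν = ∫ v, UB v ∂ν := by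
    rw [hUBdef]; rfl
  -- the expected first-best from the buyer's viewpoint
  set Jf : ℝ → ℝ := fun v => ∫ q in (0:ℝ)..1, max (v - C q) 0 with hJdef
  have hMlocint : ∀ (v a b : ℝ), IntervalIntegrable (fun u => max (v - C u) 0) volume a b := by
    intro v a b
    have hanti : Antitone fun u => max (v - C u) 0 :=
      fun s t hst => max_le_max (by linarith [hC hst]) le_rfl
    exact (hanti.antitoneOn _).intervalIntegrable
  have hFBeq : ∀ v : ℝ, (∫ q in (0:ℝ)..1, max (v - c q) 0) = Jf v := by
    intro v
    apply intervalIntegral.integral_congr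
    intro q hq
    rw [uIcc_of_le zero_le_one] at hq
    show max (v - c q) 0 = max (v - C q) 0
    rw [hCeq q hq]
  have hJnn : ∀ v, 0 ≤ Jf v :=
    fun v => intervalIntegral.integral_nonneg zero_le_one (fun u _ => le_max_right _ _)
  have hJle : ∀ v, Jf v ≤ max (v - C 0) 0 := by
    intro v
    calc Jf v ≤ ∫ _ in (0:ℝ)..1, max (v - C 0) 0 := by
          apply intervalIntegral.integral_mono_on zero_le_one (hMlocint v 0 1)
            intervalIntegrable_const
          intro q _
          exact max_le_max (by linarith [hC0le q]) le_rfl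
    _ = max (v - C 0) 0 := by simp
  have hJmono : Monotone Jf := by
    intro v w hvw
    apply intervalIntegral.integral_mono_on zero_le_one (hMlocint v 0 1) (hMlocint w 0 1)
    intro q _
    exact max_le_max (by linarith) le_rfl
  have habs_bd : ∀ x s : ℝ, max (x - s) 0 ≤ |x| + |s| := by
    intro x s
    have h1 := le_abs_self x
    have h2 := neg_abs_le s
    exact max_le (by linarith) (by positivity)
  have hdom : Integrable (fun v : ℝ => |v| + |C 0|) ν := hνabs.add (integrable_const _)
  have hJint : Integrable Jf ν := by
    apply Integrable.mono' hdom hJmono.measurable.aestronglyMeasurable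
    apply ae_of_all
    intro v
    rw [Real.norm_eq_abs, abs_of_nonneg (hJnn v)]
    exact le_trans (hJle v) (habs_bd v (C 0))
  have hUBint : Integrable UB ν := by
    apply Integrable.mono' hdom hUBmono.measurable.aestronglyMeasurable
    apply ae_of_all
    intro v
    rw [Real.norm_eq_abs, abs_of_nonneg (hUBnn v)]
    exact le_trans (hUBle v) (habs_bd v (C 0))
  -- the seller-side crossing term
  set Tf : ℝ → ℝ := fun v => ∫ u in (0:ℝ)..1, (if C u ≤ v then C u - C (l * u) else 0) with hTdef
  have hFmeas : ∀ v : ℝ, Measurable fun u => if C u ≤ v then C u - C (l * u) else 0 := by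
    intro v
    exact Measurable.ite (measurableSet_le hCmeas measurable_const)
      (hCmeas.sub (hCmeas.comp (measurable_id.const_mul l))) measurable_const
  have hFbd : ∀ v u : ℝ, |if C u ≤ v then C u - C (l * u) else 0| ≤ C 1 - C 0 := by
    intro v u
    split_ifs
    · rw [abs_le]
      constructor <;> [skip; skip] <;>
        [linarith [hC0le u, hCle1 (l * u)]; linarith [hCle1 u, hC0le (l * u)]]
    · rw [abs_zero]; linarith [hC0le 1]
  have hFint : ∀ (v a b : ℝ), IntervalIntegrable
      (fun u => if C u ≤ v then C u - C (l * u) else 0) volume a b := by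
    intro v a b
    rw [intervalIntegrable_iff]
    apply Integrable.mono' (integrableOn_const (C := C 1 - C 0) measure_Ioc_lt_top.ne)
      (hFmeas v).aestronglyMeasurable
    exact ae_of_all _ fun u => by rw [Real.norm_eq_abs]; exact hFbd v u
  have hFnn : ∀ v u : ℝ, 0 ≤ u → (0:ℝ) ≤ if C u ≤ v then C u - C (l * u) else 0 := by
    intro v u hu
    split_ifs
    · have : C (l * u) ≤ C u := hC (by nlinarith)
      linarith
    · exact le_refl 0
  have hTnn : ∀ v, 0 ≤ Tf v := by
    intro v
    exact intervalIntegral.integral_nonneg zero_le_one (fun u hu => hFnn v u hu.1)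
  have hTle : ∀ v, Tf v ≤ C 1 - C 0 := by
    intro v
    calc Tf v ≤ ∫ _ in (0:ℝ)..1, (C 1 - C 0) := by
          apply intervalIntegral.integral_mono_on zero_le_one (hFint v 0 1)
            intervalIntegrable_const
          intro u _
          exact le_trans (le_abs_self _) (hFbd v u)
    _ = C 1 - C 0 := by simp
  have hTmono : Monotone Tf := by
    intro v w hvw
    apply intervalIntegral.integral_mono_on zero_le_one (hFint v 0 1) (hFint w 0 1)
    intro u hu
    by_cases h1 : C u ≤ v
    · rw [if_pos h1, if_pos (le_trans h1 hvw)]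
    · rw [if_neg h1]
      exact hFnn w u hu.1
  have hTint : Integrable Tf ν := by
    apply Integrable.mono' (integrable_const (C 1 - C 0))
      hTmono.measurable.aestronglyMeasurable
    apply ae_of_all
    intro v
    rw [Real.norm_eq_abs, abs_of_nonneg (hTnn v)]
    exact hTle v
  -- ★ the pointwise (in `v`) inequality
  have star : ∀ v : ℝ, (1 - l) * Jf v ≤ l * Tf v + Real.log (1 / l) * UB v := by
    intro v
    set M : ℝ → ℝ := fun u => max (v - C u) 0 with hMdef
    have hMint : ∀ a b : ℝ, IntervalIntegrable M volume a b := hMlocint v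
    have hMlint : ∀ a b : ℝ, IntervalIntegrable (fun u => M (l * u)) volume a b := by
      intro a b
      have hanti : Antitone fun u => M (l * u) := by
        intro s t hst
        simp only [hMdef]
        exact max_le_max (by linarith [hC (by nlinarith : l * s ≤ l * t)]) le_rfl
      exact (hanti.antitoneOn _).intervalIntegrable
    set u₀ : ℝ := accProb c v with hu0def
    have hu0mem : u₀ ∈ Icc (0:ℝ) 1 := ⟨hxnn v, hxle1 v⟩
    have hlu0le : l * u₀ ≤ u₀ := by nlinarith [hu0mem.1]
    have hlu0nn : 0 ≤ l * u₀ := by nlinarith [hu0mem.1]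
    -- above u₀ there is no trade
    have hup : ∀ u : ℝ, u₀ < u → u ≤ 1 → v < C u := by
      intro u h1 h2
      by_contra h
      push_neg at h
      have h0u : 0 ≤ u := le_trans hu0mem.1 (le_of_lt h1)
      have hsub : Icc (0:ℝ) u ⊆ {w : ℝ | w ∈ Icc (0:ℝ) 1 ∧ c w ≤ v} := by
        intro w hw
        have hw1 : w ∈ Icc (0:ℝ) 1 := ⟨hw.1, hw.2.trans h2⟩
        refine ⟨hw1, ?_⟩
        rw [← hCeq w hw1]
        exact le_trans (hC hw.2) h
      have hle : u ≤ u₀ := by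
        have hvol : ENNReal.ofReal u ≤ volume {w : ℝ | w ∈ Icc (0:ℝ) 1 ∧ c w ≤ v} := by
          calc ENNReal.ofReal u = volume (Icc (0:ℝ) u) := by rw [Real.volume_Icc, sub_zero]
          _ ≤ _ := measure_mono hsub
        have h5 := ENNReal.toReal_mono (hxfin v) hvol
        rw [ENNReal.toReal_ofReal h0u] at h5
        exact h5
      linarith
    have hMup : ∀ u : ℝ, u₀ < u → u ≤ 1 → M u = 0 := by
      intro u h1 h2
      have := hup u h1 h2
      simp only [hMdef]
      exact max_eq_right (by linarith)
    -- below u₀ trade occurs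
    have hdown : ∀ u : ℝ, 0 ≤ u → u < u₀ → C u ≤ v := by
      intro u h0 h1
      by_contra h
      push_neg at h
      have hsub : {w : ℝ | w ∈ Icc (0:ℝ) 1 ∧ c w ≤ v} ⊆ Icc 0 u := by
        intro w hw
        refine ⟨hw.1.1, ?_⟩
        by_contra hwu
        push_neg at hwu
        have h2 : C u ≤ C w := hC (le_of_lt hwu)
        rw [hCeq w hw.1] at h2
        linarith [hw.2]
      have hge : u₀ ≤ u := by
        have h5 := ENNReal.toReal_mono
          (by rw [Real.volume_Icc]; exact ENNReal.ofReal_ne_top) (measure_mono hsub)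
        rw [Real.volume_Icc, sub_zero, ENNReal.toReal_ofReal h0] at h5
        exact h5
      linarith
    set F : ℝ → ℝ := fun u => if C u ≤ v then C u - C (l * u) else 0 with hFdef
    have hTfv : Tf v = ∫ u in (0:ℝ)..1, F u := rfl
    have hFiv : ∀ a b : ℝ, IntervalIntegrable F volume a b := hFint v
    -- step 1 : the crossing integral localizes to [0, u₀]
    have key1 : Tf v = ∫ u in (0:ℝ)..u₀, F u := by
      have hsplit := intervalIntegral.integral_add_adjacent_intervals (hFiv 0 u₀) (hFiv u₀ 1)
      have hzero : (∫ u in u₀..(1:ℝ), F u) = 0 := by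
        rw [intervalIntegral.integral_of_le hu0mem.2]
        rw [show (∫ u in Ioc u₀ 1, F u) = ∫ _ in Ioc u₀ 1, (0:ℝ) from
          setIntegral_congr_fun measurableSet_Ioc (fun u hu => by
            simp only [hFdef]
            rw [if_neg (not_le.mpr (hup u hu.1 hu.2))])]
        simp
      rw [hTfv]
      linarith [hsplit]
    -- step 2 : rewrite the crossing integrand via M
    have key2 : (∫ u in (0:ℝ)..u₀, F u)
        = (∫ u in (0:ℝ)..u₀, M (l * u)) - ∫ u in (0:ℝ)..u₀, M u := by
      rw [← intervalIntegral.integral_sub (hMlint 0 u₀) (hMint 0 u₀)]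
      apply intervalIntegral.integral_congr_ae
      have h1 : ∀ᵐ u : ℝ ∂volume, u ≠ u₀ := by
        rw [ae_iff]
        have : {u : ℝ | ¬u ≠ u₀} = {u₀} := by ext u; simp
        rw [this]
        exact measure_singleton u₀
      filter_upwards [h1] with u hne hu
      rw [uIoc_of_le hu0mem.1] at hu
      have hu0' : u < u₀ := lt_of_le_of_ne hu.2 hne
      have hCu : C u ≤ v := hdown u (le_of_lt hu.1) hu0'
      have hClu : C (l * u) ≤ C u := hC (by nlinarith [hu.1.le])
      simp only [hFdef, hMdef]
      rw [if_pos hCu, max_eq_left (by linarith), max_eq_left (by linarith)]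
      ring
    -- step 3 : substitution u ↦ l * u
    have key3 : (∫ u in (0:ℝ)..u₀, M (l * u)) = l⁻¹ * ∫ u in (0:ℝ)..(l * u₀), M u := by
      rw [intervalIntegral.integral_comp_mul_left M hlne]
      norm_num
    -- step 4 : splitting of the first-best integral
    have key4 : (∫ u in (0:ℝ)..1, M u)
        = (∫ u in (0:ℝ)..(l * u₀), M u) + ∫ u in (l * u₀)..1, M u :=
      (intervalIntegral.integral_add_adjacent_intervals (hMint 0 (l * u₀)) (hMint (l * u₀) 1)).symm
    have key5 : (∫ u in (l * u₀)..1, M u)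
        = (∫ u in (l * u₀)..u₀, M u) + ∫ u in u₀..1, M u :=
      (intervalIntegral.integral_add_adjacent_intervals (hMint (l * u₀) u₀) (hMint u₀ 1)).symm
    have key6 : (∫ u in u₀..(1:ℝ), M u) = 0 := by
      rw [intervalIntegral.integral_of_le hu0mem.2]
      rw [show (∫ u in Ioc u₀ 1, M u) = ∫ _ in Ioc u₀ 1, (0:ℝ) from
        setIntegral_congr_fun measurableSet_Ioc (fun u hu => hMup u hu.1 hu.2)]
      simp
    -- step 5 : the buyer covers the middle range
    have key7 : (∫ u in (l * u₀)..u₀, M u) ≤ Real.log (1 / l) * UB v := by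
      rcases eq_or_lt_of_le hu0mem.1 with h0 | h0
      · have heq : l * u₀ = u₀ := by rw [← h0]; ring
        rw [heq, intervalIntegral.integral_same]
        exact mul_nonneg hlog (hUBnn v)
      · have hlu0pos : 0 < l * u₀ := by positivity
        have hstep : (∫ u in (l * u₀)..u₀, M u) ≤ ∫ u in (l * u₀)..u₀, UB v * (1 / u) := by
          apply intervalIntegral.integral_mono_on hlu0le (hMint _ _)
          · apply ContinuousOn.intervalIntegrable
            apply continuousOn_const.mul
            apply ContinuousOn.div continuousOn_const continuousOn_id
            intro u hu
            rw [uIcc_of_le hlu0le] at hu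
            exact ne_of_gt (lt_of_lt_of_le hlu0pos hu.1)
          · intro u hu
            have hu1 : 0 < u := lt_of_lt_of_le hlu0pos hu.1
            have hu2 : u ≤ 1 := le_trans hu.2 hu0mem.2
            have hkey := hUBkey v u ⟨hu1.le, hu2⟩
            simp only [hMdef]
            rw [mul_one_div, le_div_iff₀ hu1, mul_comm]
            exact hkey
        have hlogint : (∫ u in (l * u₀)..u₀, UB v * (1 / u)) = UB v * Real.log (1 / l) := by
          rw [intervalIntegral.integral_const_mul,
            integral_one_div_of_pos hlu0pos h0]
          congr 2
          field_simp
        rw [mul_comm (Real.log (1 / l))]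
        linarith [hstep]
    -- assemble
    have e1 : l * Tf v = (∫ u in (0:ℝ)..(l * u₀), M u) - l * ∫ u in (0:ℝ)..u₀, M u := by
      rw [key1, key2, key3]
      field_simp
    have e2 : (∫ u in (0:ℝ)..u₀, M u) = Jf v := by
      have hadd := intervalIntegral.integral_add_adjacent_intervals (hMint 0 u₀) (hMint u₀ 1)
      have hJ : Jf v = ∫ u in (0:ℝ)..1, M u := rfl
      rw [hJ]
      linarith [key6, hadd]
    have e3 : Jf v = (∫ u in (0:ℝ)..(l * u₀), M u) + (∫ u in (l * u₀)..u₀, M u) := by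
      have hJ : Jf v = ∫ u in (0:ℝ)..1, M u := rfl
      rw [hJ, key4, key5, key6]
      ring
    nlinarith [e1, e2, e3, key7]
  -- integrate ★ over ν
  have hmain : (∫ v, (1 - l) * Jf v ∂ν) ≤ ∫ v, (l * Tf v + Real.log (1 / l) * UB v) ∂ν := by
    apply integral_mono (hJint.const_mul (1 - l))
      ((hTint.const_mul l).add (hUBint.const_mul (Real.log (1 / l))))
    intro v
    exact star v
  have hFB : FB c ν = ∫ v, Jf v ∂ν := by
    rw [FB]
    exact integral_congr_ae (ae_of_all _ fun v => hFBeq v)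
  -- Fubini for the crossing term
  haveI : IsFiniteMeasure (volume.restrict (Ioc (0:ℝ) 1)) :=
    ⟨by rw [Measure.restrict_apply_univ]; exact measure_Ioc_lt_top⟩
  have hmeasF2 : Measurable (Function.uncurry fun u v : ℝ =>
      if C u ≤ v then C u - C (l * u) else 0) := by
    apply Measurable.ite
    · exact measurableSet_le (hCmeas.comp measurable_fst) measurable_snd
    · exact (hCmeas.comp measurable_fst).sub (hCmeas.comp (measurable_fst.const_mul l))
    · exact measurable_const
  have hintF2 : Integrable (Function.uncurry fun u v : ℝ =>
      if C u ≤ v then C u - C (l * u) else 0) ((volume.restrict (Ioc (0:ℝ) 1)).prod ν) := by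
    apply Integrable.mono' (integrable_const (C 1 - C 0)) hmeasF2.aestronglyMeasurable
    apply ae_of_all
    rintro ⟨u, w⟩
    rw [Real.norm_eq_abs]
    exact hFbd w u
  have hswap : (∫ v, Tf v ∂ν) = ∫ u in Ioc (0:ℝ) 1, (C u - C (l * u)) * r (C u) := by
    have h2 : ∀ u : ℝ, (∫ w, (if C u ≤ w then C u - C (l * u) else 0) ∂ν)
        = (C u - C (l * u)) * r (C u) := by
      intro u
      have hind : (fun w => if C u ≤ w then C u - C (l * u) else 0)
          = (Ici (C u)).indicator (fun _ => C u - C (l * u)) := by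
        funext w
        rw [Set.indicator_apply]
        simp [mem_Ici]
      rw [hind, integral_indicator_const _ measurableSet_Ici, smul_eq_mul, mul_comm]
      rfl
    have h3 := integral_integral_swap hintF2
    simp only [h2] at h3
    rw [h3]
    refine integral_congr_ae (ae_of_all _ fun v => ?_)
    exact intervalIntegral.integral_of_le zero_le_one
  -- the seller bound
  set g : ℝ → ℝ := fun u => (C u - C (l * u)) * r (C u) with hgdef
  have hgmeas : Measurable g :=
    (hCmeas.sub (hCmeas.comp (measurable_id.const_mul l))).mul (hrmeas.comp hCmeas)
  have hgbd : ∀ u, |g u| ≤ C 1 - C 0 := by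
    intro u
    simp only [hgdef]
    rw [abs_mul, abs_of_nonneg (hrnn _)]
    calc |C u - C (l * u)| * r (C u) ≤ |C u - C (l * u)| * 1 :=
          mul_le_mul_of_nonneg_left (hrle1 _) (abs_nonneg _)
    _ = |C u - C (l * u)| := mul_one _
    _ ≤ C 1 - C 0 := abs_le.mpr
        ⟨by linarith [hC0le u, hCle1 (l * u)], by linarith [hCle1 u, hC0le (l * u)]⟩
  have hgcompint : IntervalIntegrable (fun q => g (q / l)) volume 0 l := by
    rw [intervalIntegrable_iff]
    apply Integrable.mono' (integrableOn_const (C := C 1 - C 0) measure_Ioc_lt_top.ne)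
      ((hgmeas.comp (measurable_id.div_const l)).aestronglyMeasurable)
    exact ae_of_all _ fun u => by rw [Real.norm_eq_abs]; exact hgbd _
  have hsub1 : (∫ q in (0:ℝ)..l, g (q / l)) = l * ∫ u in (0:ℝ)..1, g u := by
    rw [intervalIntegral.integral_comp_div g hlne, zero_div, div_self hlne, smul_eq_mul]
  have hUSint : ∀ a b : ℝ, a ∈ Icc (0:ℝ) 1 → b ∈ Icc (0:ℝ) 1 →
      IntervalIntegrable US volume a b := by
    intro a b ha hb
    exact (hUSanti.mono (Icc_subset_Icc (le_min ha.1 hb.1) (max_le ha.2 hb.2))).intervalIntegrable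
  have hcomp_le : (∫ q in (0:ℝ)..l, g (q / l)) ≤ ∫ q in (0:ℝ)..l, US q := by
    apply intervalIntegral.integral_mono_on hl0.le hgcompint
      (hUSint 0 l ⟨le_refl 0, zero_le_one⟩ ⟨hl0.le, hl1.le⟩)
    intro q hq
    have hql : l * (q / l) = q := by field_simp
    have hcq : C q = c q := hCeq q ⟨hq.1, hq.2.trans hl1.le⟩
    have hkey := le_ciSup (hUSbdd q) (C (q / l))
    simp only [hgdef, hUSdef]
    rw [hql, hcq]
    exact hkey
  have hseller : l * (∫ u in (0:ℝ)..1, g u) ≤ uS c ν := by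
    have hsplit := intervalIntegral.integral_add_adjacent_intervals
      (hUSint 0 l ⟨le_refl 0, zero_le_one⟩ ⟨hl0.le, hl1.le⟩)
      (hUSint l 1 ⟨hl0.le, hl1.le⟩ ⟨zero_le_one, le_refl 1⟩)
    have h2 : 0 ≤ ∫ q in l..(1:ℝ), US q :=
      intervalIntegral.integral_nonneg hl1.le (fun q _ => hUSnn q)
    rw [huS]
    linarith [hsub1, hcomp_le]
  -- final assembly
  have hTg : (∫ v, Tf v ∂ν) = ∫ u in (0:ℝ)..1, g u := by
    rw [hswap, intervalIntegral.integral_of_le zero_le_one]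
  calc (1 - l) * FB c ν = ∫ v, (1 - l) * Jf v ∂ν := by
        rw [hFB, integral_const_mul]
  _ ≤ ∫ v, (l * Tf v + Real.log (1 / l) * UB v) ∂ν := hmain
  _ = l * (∫ v, Tf v ∂ν) + Real.log (1 / l) * uB c ν := by
        rw [integral_add (hTint.const_mul l) (hUBint.const_mul (Real.log (1 / l))),
          integral_const_mul, integral_const_mul, huB]
  _ ≤ uS c ν + uB c ν * Real.log (1 / l) := by
        rw [hTg, mul_comm (Real.log (1 / l))]
        exact add_le_add_left hseller _
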